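/- If φ is holomorphic near 𝔻̄ and injective on 𝔻, and z₀ ∈ ∂𝔻 satisfies φ'(z₀) = 0, then φ''(z₀) ≠ 0; i.e. every zero of φ' on the boundary circle is simple. -/

import Mathlib

open Metric

open Complex Filter
open scoped Topology Real


lemma aux_norm_lt_one (z₀ v : ℂ) (h1 : ‖z₀‖ = 1) (c : ℝ)
    (hre : ((starRingEnd ℂ) z₀ * v).re ≤ -c) (hv : ‖v‖ ^ 2 < 2 * c) :
    ‖z₀ + v‖ < 1 := by
  have h2 : Complex.normSq (z₀ + v) = Complex.normSq z₀ + Complex.normSq v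
      + 2 * (z₀ * (starRingEnd ℂ) v).re := Complex.normSq_add z₀ v
  have h3 : (z₀ * (starRingEnd ℂ) v).re = ((starRingEnd ℂ) z₀ * v).re := by
    rw [← Complex.conj_re (z₀ * (starRingEnd ℂ) v)]
    simp [mul_comm]
  have h4 : Complex.normSq z₀ = 1 := by
    rw [Complex.normSq_eq_norm_sq, h1]; norm_num
  have h5 : Complex.normSq v = ‖v‖ ^ 2 := by
    rw [Complex.normSq_eq_norm_sq]
  have h6 : Complex.normSq (z₀ + v) < 1 := by
    rw [h2, h3, h4, h5]; nlinarith
  have h7 : ‖z₀ + v‖ ^ 2 < 1 := by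
    have h8 : Complex.normSq (z₀ + v) = ‖z₀ + v‖ ^ 2 := by
      rw [Complex.normSq_eq_norm_sq]
    rwa [h8] at h6
  nlinarith [norm_nonneg (z₀ + v)]

/-- If `φ` is holomorphic near the closed unit disc and injective on `𝔻`, then every zero of
`φ'` on the boundary circle is simple: `φ'(z₀) = 0` with `|z₀| = 1` implies `φ''(z₀) ≠ 0`. -/
theorem stmt17 (φ : ℂ → ℂ) (V : Set ℂ) (hV : IsOpen V)
    (hVD : closedBall (0 : ℂ) 1 ⊆ V) (hφ : DifferentiableOn ℂ φ V)
    (hinj : Set.InjOn φ (ball (0 : ℂ) 1)) (z₀ : ℂ) (hz₀ : z₀ ∈ sphere (0 : ℂ) 1)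
    (hd : deriv φ z₀ = 0) :
    deriv (deriv φ) z₀ ≠ 0 := by
  intro hd2
  have hz₀V : z₀ ∈ V := hVD (sphere_subset_closedBall hz₀)
  have hnorm : ‖z₀‖ = 1 := by simpa using hz₀
  have hz₀ne : z₀ ≠ 0 := by intro h; rw [h] at hnorm; simp at hnorm
  have hAn : AnalyticOnNhd ℂ φ V := hφ.analyticOnNhd hV
  set f : ℂ → ℂ := fun z => φ z - φ z₀ with hf_def
  have hfA : AnalyticAt ℂ f z₀ := (hAn z₀ hz₀V).sub analyticAt_const
  have hderiv_f : deriv f = deriv φ := by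
    funext x; exact deriv_sub_const _
  have hf0 : f z₀ = 0 := sub_self _
  -- order is not ⊤ : otherwise φ constant near z₀, contradicting injectivity
  have hne : ¬ ∀ᶠ z in 𝓝 z₀, f z = 0 := by
    intro hev
    obtain ⟨r, hr, hball⟩ := Metric.eventually_nhds_iff_ball.mp hev
    set s := min r 1 with hs
    have hs0 : 0 < s := lt_min hr one_pos
    have hs1 : s ≤ 1 := min_le_right _ _
    have hsr : s ≤ r := min_le_left _ _
    have key : ∀ t : ℝ, 0 < t → t ≤ s / 2 → ((1 - (t:ℂ)) * z₀ ∈ ball (0:ℂ) 1 ∧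
        φ ((1 - (t:ℂ)) * z₀) = φ z₀) := by
      intro t ht hts
      have ht1 : t < 1 := by nlinarith
      constructor
      · rw [mem_ball_zero_iff]
        have : ‖(1 - (t:ℂ)) * z₀‖ = ‖(1 - (t:ℂ))‖ := by
          rw [norm_mul, hnorm, mul_one]
        rw [this]
        have : ((1:ℂ) - (t:ℂ)) = ((1 - t : ℝ) : ℂ) := by push_cast; ring
        rw [this, Complex.norm_real, Real.norm_eq_abs, abs_of_pos (by linarith)]
        linarith
      · have hmem : (1 - (t:ℂ)) * z₀ ∈ ball z₀ r := by
          rw [mem_ball]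
          have : dist ((1 - (t:ℂ)) * z₀) z₀ = ‖(1 - (t:ℂ)) * z₀ - z₀‖ := by
            rw [dist_eq_norm]
          rw [this]
          have he : (1 - (t:ℂ)) * z₀ - z₀ = -(t:ℂ) * z₀ := by ring
          rw [he, norm_mul, hnorm, mul_one, norm_neg, Complex.norm_real]
          rw [Real.norm_eq_abs, abs_of_pos ht]
          linarith
        have := hball _ hmem
        exact sub_eq_zero.mp this
    obtain ⟨h1mem, h1eq⟩ := key (s/2) (by linarith) le_rfl
    obtain ⟨h2mem, h2eq⟩ := key (s/4) (by linarith) (by linarith)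
    have heq := hinj h1mem h2mem (h1eq.trans h2eq.symm)
    have h9 : ((s/2 : ℝ) : ℂ) = ((s/4 : ℝ) : ℂ) := by
      have h8 := mul_right_cancel₀ hz₀ne heq
      linear_combination -h8
    have h10 : (s/2 : ℝ) = s/4 := by exact_mod_cast h9
    linarith
  have hfin : analyticOrderAt f z₀ ≠ ⊤ := fun h => hne (analyticOrderAt_eq_top.mp h)
  obtain ⟨m, hm⟩ := WithTop.ne_top_iff_exists.mp hfin
  obtain ⟨g, hg, hg0, hfg⟩ := (hfA.analyticOrderAt_eq_natCast (n := m)).mp hm.symm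
  have hfg' : ∀ᶠ z in 𝓝 z₀, f z = (z - z₀) ^ m * g z := by
    filter_upwards [hfg] with z hz; simpa [smul_eq_mul] using hz
  have hfgE : f =ᶠ[𝓝 z₀] (fun z => (z - z₀) ^ m * g z) := hfg'
  -- m ≥ 3
  have hm0 : m ≠ 0 := by
    intro h; subst h
    have := hfg'.self_of_nhds
    simp [hf0] at this
    exact hg0 this.symm
  have hm1 : m ≠ 1 := by
    intro h; subst h
    have hgd : HasDerivAt g (deriv g z₀) z₀ := hg.differentiableAt.hasDerivAt
    have h1 : HasDerivAt (fun z => (z - z₀) ^ 1 * g z) (g z₀) z₀ := by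
      have := (((hasDerivAt_id z₀).sub_const z₀)).fun_mul hgd
      simpa using this
    have h2 : deriv f z₀ = g z₀ := by
      rw [hfgE.deriv_eq, h1.deriv]
    rw [hderiv_f, hd] at h2
    exact hg0 h2.symm
  have hm2 : m ≠ 2 := by
    intro h; subst h
    have hgev : ∀ᶠ z in 𝓝 z₀, AnalyticAt ℂ g z := hg.eventually_analyticAt
    have hdF : ∀ᶠ z in 𝓝 z₀, deriv (fun w => (w - z₀) ^ 2 * g w) z
        = 2 * (z - z₀) * g z + (z - z₀) ^ 2 * deriv g z := by
      filter_upwards [hgev] with z hz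
      have h2 : HasDerivAt (fun w : ℂ => (w - z₀) ^ 2) (2 * (z - z₀)) z := by
        have := ((hasDerivAt_id z).sub_const z₀).fun_pow 2
        simpa using this
      have := h2.fun_mul hz.differentiableAt.hasDerivAt
      rw [this.deriv]
    -- deriv g analytic at z₀
    have hdgA : AnalyticAt ℂ (deriv g) z₀ := by
      obtain ⟨sU, hsU_mem, hsU⟩ := hgev.exists_mem
      have : AnalyticOnNhd ℂ g (interior sU) := fun x hx => hsU x (interior_subset hx)
      exact this.deriv z₀ (mem_interior_iff_mem_nhds.mpr hsU_mem)
    have hchain : deriv f =ᶠ[𝓝 z₀]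
        (fun z => 2 * (z - z₀) * g z + (z - z₀) ^ 2 * deriv g z) :=
      (hfgE.deriv).trans hdF
    have t1 : HasDerivAt (fun z : ℂ => 2 * (z - z₀) * g z) (2 * g z₀) z₀ := by
      have hlin : HasDerivAt (fun z : ℂ => 2 * (z - z₀)) 2 z₀ := by
        simpa using ((hasDerivAt_id z₀).sub_const z₀).const_mul (2:ℂ)
      have := hlin.fun_mul hg.differentiableAt.hasDerivAt
      simpa using this
    have t2 : HasDerivAt (fun z : ℂ => (z - z₀) ^ 2 * deriv g z) 0 z₀ := by
      have h2 : HasDerivAt (fun w : ℂ => (w - z₀) ^ 2) 0 z₀ := by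
        have := ((hasDerivAt_id z₀).sub_const z₀).fun_pow 2
        simpa using this
      have := h2.fun_mul hdgA.differentiableAt.hasDerivAt
      simpa using this
    have hG : deriv (deriv f) z₀ = 2 * g z₀ := by
      rw [hchain.deriv_eq]
      have := (t1.fun_add t2).deriv
      simpa using this
    rw [hderiv_f, hd2] at hG
    have : g z₀ = 0 := by
      have h2ne : (2:ℂ) ≠ 0 := two_ne_zero
      field_simp at hG
      exact (mul_eq_zero.mp hG.symm).resolve_left h2ne
    exact hg0 this
  have hm3 : 3 ≤ m := by omega
  -- construct an m-th root h of g near z₀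
  have hmC : (m : ℂ) ≠ 0 := Nat.cast_ne_zero.mpr (by omega)
  set c : ℂ := g z₀ with hc_def
  set h : ℂ → ℂ := fun z => Complex.exp ((Complex.log (g z / c) + Complex.log c) / m)
    with hh_def
  have hdivA : AnalyticAt ℂ (fun z => g z / c) z₀ := hg.div analyticAt_const hg0
  have hdiv1 : g z₀ / c = 1 := div_self hg0
  have hlogA : AnalyticAt ℂ (fun z => Complex.log (g z / c)) z₀ := by
    apply (analyticAt_clog _).comp hdivA
    rw [hdiv1]; exact Complex.one_mem_slitPlane
  have hhA : AnalyticAt ℂ h z₀ := by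
    apply analyticAt_cexp.comp
    exact (hlogA.add analyticAt_const).div analyticAt_const hmC
  have hh0 : h z₀ ≠ 0 := Complex.exp_ne_zero _
  have hpow : ∀ᶠ z in 𝓝 z₀, h z ^ m = g z := by
    have hgne : ∀ᶠ z in 𝓝 z₀, g z ≠ 0 := hg.continuousAt.eventually_ne hg0
    filter_upwards [hgne] with z hz
    have h1 : h z ^ m = Complex.exp ((m : ℂ) * ((Complex.log (g z / c) + Complex.log c) / m)) := by
      rw [Complex.exp_nat_mul]
    rw [h1, mul_div_cancel₀ _ hmC, Complex.exp_add,
      Complex.exp_log (div_ne_zero hz hg0), Complex.exp_log hg0,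
      div_mul_cancel₀ _ hg0]
  -- ψ and its local inverse
  set ψ : ℂ → ℂ := fun z => (z - z₀) * h z with hψ_def
  set u : ℂ := h z₀ with hu_def
  have hu : u ≠ 0 := hh0
  have hψ0 : ψ z₀ = 0 := by simp [hψ_def]
  obtain ⟨d, hhsd⟩ : ∃ d, HasStrictDerivAt h d z₀ := by
    obtain ⟨p, hp⟩ := hhA
    exact ⟨_, hp.hasStrictDerivAt⟩
  have hψd : HasStrictDerivAt ψ u z₀ := by
    have h1 := HasStrictDerivAt.fun_mul ((hasStrictDerivAt_id z₀).sub_const z₀) hhsd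
    simpa [hψ_def, hu_def] using h1
  set q : ℂ → ℂ := hψd.localInverse ψ u z₀ hu with hq_def
  have hq_right : ∀ᶠ w in 𝓝 (0:ℂ), ψ (q w) = w := by
    have := (hψd.hasStrictFDerivAt_equiv hu).eventually_right_inverse
    rwa [hψ0] at this
  have hq0 : q 0 = z₀ := by
    have := (hψd.hasStrictFDerivAt_equiv hu).localInverse_apply_image
    rwa [hψ0] at this
  have hqd : HasStrictDerivAt q u⁻¹ 0 := by
    have := hψd.to_localInverse hu
    rwa [hψ0] at this
  have hq_cont : ContinuousAt q 0 := hqd.hasDerivAt.differentiableAt.continuousAt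
  -- the error term
  set e : ℂ → ℂ := fun w => q w - z₀ - w * u⁻¹ with he_def
  have hE : ∀ᶠ w in 𝓝 (0:ℂ), ‖e w‖ ≤ (1 / (8 * ‖u‖)) * ‖w‖ := by
    have hlo := hasDerivAt_iff_isLittleO.mp hqd.hasDerivAt
    have hu0 : (0:ℝ) < ‖u‖ := norm_pos_iff.mpr hu
    have heps : (0:ℝ) < 1 / (8 * ‖u‖) := one_div_pos.mpr (by linarith)
    have := (Asymptotics.isLittleO_iff.mp hlo) heps
    filter_upwards [this] with w hw
    simpa [he_def, hq0, smul_eq_mul, mul_comm] using hw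
  have hz₀conj : (starRingEnd ℂ) z₀ * z₀ = 1 := by
    have := Complex.normSq_eq_norm_sq z₀
    rw [hnorm] at this
    rw [mul_comm, Complex.mul_conj, this]; norm_num
  -- the key pointwise construction
  have key : ∀ ν : ℂ, ‖ν‖ = 1 → ν.re ≤ -(1/2) →
      ∀ᶠ t : ℝ in 𝓝[>] (0:ℝ), ‖q (u * z₀ * (t:ℂ) * ν)‖ < 1 ∧
        ψ (q (u * z₀ * (t:ℂ) * ν)) = u * z₀ * (t:ℂ) * ν ∧
        f (q (u * z₀ * (t:ℂ) * ν)) = (u * z₀ * (t:ℂ) * ν) ^ m := by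
    intro ν hν1 hνre
    set w : ℝ → ℂ := fun t => u * z₀ * (t:ℂ) * ν with hw_def
    have htend : Filter.Tendsto w (𝓝[>] (0:ℝ)) (𝓝 0) := by
      have h1 : Filter.Tendsto w (𝓝 (0:ℝ)) (𝓝 (u * z₀ * ((0:ℝ):ℂ) * ν)) := by
        apply Filter.Tendsto.mul _ tendsto_const_nhds
        exact tendsto_const_nhds.mul (Complex.continuous_ofReal.tendsto 0)
      simpa using h1.mono_left nhdsWithin_le_nhds
    have htendq : Filter.Tendsto (fun t => q (w t)) (𝓝[>] (0:ℝ)) (𝓝 z₀) := by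
      have := hq_cont.tendsto.comp htend
      rwa [hq0] at this
    have hsmall : ∀ᶠ t in 𝓝[>] (0:ℝ), t < 1/8 :=
      eventually_nhdsWithin_of_eventually_nhds (Filter.Tendsto.eventually_lt_const (by norm_num) tendsto_id)
    filter_upwards [htend.eventually hE, htend.eventually hq_right,
      htendq.eventually hfg', htendq.eventually hpow,
      self_mem_nhdsWithin, hsmall] with t ht_e ht_inv ht_f ht_pow ht_pos ht_lt
    have ht_pos' : (0:ℝ) < t := ht_pos
    have hwnorm : ‖w t‖ = ‖u‖ * t := by
      rw [hw_def]
      simp only [norm_mul, hnorm, hν1, Complex.norm_real, Real.norm_eq_abs,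
        abs_of_pos ht_pos']
      ring
    -- the displacement
    set v : ℂ := w t * u⁻¹ + e (w t) with hv_def
    have hqv : q (w t) = z₀ + v := by
      rw [hv_def, he_def]; ring
    have hwu : w t * u⁻¹ = z₀ * (t:ℂ) * ν := by
      rw [hw_def]
      field_simp
    have henorm : ‖e (w t)‖ ≤ t / 8 := by
      have := ht_e
      rw [hwnorm] at this
      have hu0 : (0:ℝ) < ‖u‖ := norm_pos_iff.mpr hu
      calc ‖e (w t)‖ ≤ 1 / (8 * ‖u‖) * (‖u‖ * t) := this
        _ = t / 8 := by
          have hcalc : 1 / (8 * ‖u‖) * (‖u‖ * t) = (‖u‖⁻¹ * ‖u‖) * (t / 8) := by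
            rw [one_div, mul_inv]
            ring
          rw [hcalc, inv_mul_cancel₀ (ne_of_gt hu0), one_mul]
    have hre1 : ((starRingEnd ℂ) z₀ * (w t * u⁻¹)).re = t * ν.re := by
      rw [hwu]
      have : (starRingEnd ℂ) z₀ * (z₀ * (t:ℂ) * ν) = (t:ℂ) * ν := by
        rw [show (starRingEnd ℂ) z₀ * (z₀ * (t:ℂ) * ν) = ((starRingEnd ℂ) z₀ * z₀) * ((t:ℂ) * ν) by ring,
          hz₀conj, one_mul]
      rw [this, Complex.re_ofReal_mul]
    have hre2 : |((starRingEnd ℂ) z₀ * e (w t)).re| ≤ t / 8 := by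
      calc |((starRingEnd ℂ) z₀ * e (w t)).re| ≤ ‖(starRingEnd ℂ) z₀ * e (w t)‖ :=
            Complex.abs_re_le_norm _
        _ = ‖(starRingEnd ℂ) z₀ * e (w t)‖ := rfl
        _ = ‖e (w t)‖ := by rw [norm_mul, RCLike.norm_conj, hnorm, one_mul]
        _ ≤ t / 8 := henorm
    have hre : ((starRingEnd ℂ) z₀ * v).re ≤ -(t/4) := by
      rw [hv_def, mul_add, Complex.add_re, hre1]
      have h1 : t * ν.re ≤ t * (-(1/2)) := by
        apply mul_le_mul_of_nonneg_left hνre (le_of_lt ht_pos')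
      have h2 := (abs_le.mp hre2).2
      linarith
    have hvnorm : ‖v‖ ≤ 2 * t := by
      calc ‖v‖ ≤ ‖w t * u⁻¹‖ + ‖e (w t)‖ := norm_add_le _ _
        _ = t + ‖e (w t)‖ := by
            rw [hwu]
            simp only [norm_mul, hnorm, hν1, Complex.norm_real, Real.norm_eq_abs,
              abs_of_pos ht_pos']
            ring_nf
        _ ≤ t + t/8 := by linarith
        _ ≤ 2 * t := by linarith
    have hball : ‖q (w t)‖ < 1 := by
      rw [hqv]
      apply aux_norm_lt_one z₀ v hnorm (t/4) hre
      have : ‖v‖^2 ≤ (2*t)^2 := by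
        apply pow_le_pow_left₀ (norm_nonneg _) hvnorm
      nlinarith
    refine ⟨hball, ht_inv, ?_⟩
    rw [ht_f, ← ht_pow, ← mul_pow]
    have hfold : (q (w t) - z₀) * h (q (w t)) = ψ (q (w t)) := rfl
    rw [hfold, ht_inv]
  -- the two directions
  set ζ : ℂ := Complex.exp (2 * Real.pi * Complex.I / m) with hζ_def
  have hprim : IsPrimitiveRoot ζ m := by
    have h1 := Complex.isPrimitiveRoot_exp m (by omega : m ≠ 0)
    exact h1
  have hζm : ζ ^ m = 1 := hprim.pow_eq_one
  have hζ1 : ζ ≠ 1 := hprim.ne_one (by omega)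
  set ω : ℂ := Complex.exp ((↑(Real.pi - Real.pi / m) : ℂ) * Complex.I) with hω_def
  have hων : ‖ω‖ = 1 := by
    rw [hω_def, Complex.norm_exp_ofReal_mul_I]
  have hcos : Real.cos (Real.pi / m) ≥ 1/2 := by
    have hm_pos : (0:ℝ) < m := by positivity
    have h3m : (3:ℝ) ≤ (m:ℝ) := by exact_mod_cast hm3
    have h1 : Real.pi / (m:ℝ) ≤ Real.pi / 3 := by
      gcongr
    have h2 := Real.cos_le_cos_of_nonneg_of_le_pi
      (div_nonneg Real.pi_pos.le (by positivity : (0:ℝ) ≤ (m:ℝ)))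
      (by linarith [Real.pi_pos] : Real.pi / 3 ≤ Real.pi) h1
    rw [Real.cos_pi_div_three] at h2
    linarith
  have hωre : ω.re ≤ -(1/2) := by
    rw [hω_def, Complex.exp_ofReal_mul_I_re, Real.cos_pi_sub]
    linarith
  have hζω : ζ * ω = Complex.exp ((↑(Real.pi + Real.pi / m) : ℂ) * Complex.I) := by
    rw [hζ_def, hω_def, ← Complex.exp_add]
    congr 1
    push_cast
    field_simp
    ring
  have hζων : ‖ζ * ω‖ = 1 := by
    rw [hζω]
    have : ((Real.pi + Real.pi / m : ℝ) : ℂ) * Complex.I = (↑(Real.pi + Real.pi / m) : ℂ) * Complex.I := rfl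
    rw [Complex.norm_exp_ofReal_mul_I]
  have hζωre : (ζ * ω).re ≤ -(1/2) := by
    rw [hζω, Complex.exp_ofReal_mul_I_re]
    have : Real.cos (Real.pi + Real.pi / m) = -Real.cos (Real.pi / m) := by
      rw [show Real.pi + Real.pi / m = Real.pi - (-(Real.pi / m)) by ring,
        Real.cos_pi_sub, Real.cos_neg]
    rw [this]; linarith
  -- pick a common t
  obtain ⟨t, ⟨hq1, hinv1, hval1⟩, ⟨hq2, hinv2, hval2⟩, ht_pos⟩ :=
    ((key ω hων hωre).and ((key (ζ * ω) hζων hζωre).and self_mem_nhdsWithin)).exists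
  set w₁ : ℂ := u * z₀ * (t:ℂ) * ω with hw₁
  set w₂ : ℂ := u * z₀ * (t:ℂ) * (ζ * ω) with hw₂
  have ht_pos' : (0:ℝ) < t := ht_pos
  have hw₁ne : w₁ ≠ 0 := by
    rw [hw₁]
    apply mul_ne_zero (mul_ne_zero (mul_ne_zero hu hz₀ne) _) (Complex.exp_ne_zero _)
    exact_mod_cast ne_of_gt ht_pos'
  have hw12 : w₂ = ζ * w₁ := by rw [hw₁, hw₂]; ring
  have hwne : w₁ ≠ w₂ := by
    intro hEq
    rw [hw12] at hEq
    have hEq' : (1:ℂ) * w₁ = ζ * w₁ := by rw [one_mul]; exact hEq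
    exact hζ1 (mul_right_cancel₀ hw₁ne hEq').symm
  have hzne : q w₁ ≠ q w₂ := by
    intro h
    apply hwne
    rw [← hinv1, ← hinv2, h]
  have hφeq : φ (q w₁) = φ (q w₂) := by
    have hpow2 : w₂ ^ m = w₁ ^ m := by
      rw [hw12, mul_pow, hζm, one_mul]
    have h1 : f (q w₁) = f (q w₂) := by
      rw [hval1, hval2, hpow2]
    simpa [hf_def, sub_left_inj] using h1
  have := hinj (mem_ball_zero_iff.mpr hq1) (mem_ball_zero_iff.mpr hq2) hφeq
  exact hzne this
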